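/- If λ_s < λ_b then α₀ = α, and if λ_s > λ_b then α₀ = α·(1 − exp(λ_b − λ_s)). -/

import Mathlib

open Filter Topology

/-- A cumulative distribution function: non-decreasing, right-continuous,
tending to 0 at -∞ and to 1 at +∞. -/
def IsCDF (G : ℝ → ℝ) : Prop :=
  Monotone G ∧ (∀ x : ℝ, ContinuousWithinAt G (Set.Ici x) x) ∧
    Tendsto G atBot (𝓝 0) ∧ Tendsto G atTop (𝓝 1)

/-- The identifiable mixing proportion α₀. -/
noncomputable def alpha0 (F Fb : ℝ → ℝ) : ℝ :=
  sInf {γ : ℝ | γ ∈ Set.Ioc (0 : ℝ) 1 ∧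
    IsCDF (fun x => (F x - (1 - γ) * Fb x) / γ)}

/-- The CDF of the Poisson distribution with mean λ, viewed as a probability
distribution on ℝ supported on the non-negative integers. -/
noncomputable def poissonCDF (lam : ℝ) (x : ℝ) : ℝ :=
  ∑' k : ℕ, if (k : ℝ) ≤ x then lam ^ k * Real.exp (-lam) / (Nat.factorial k) else 0

/- ### Auxiliary theory of discrete step functions -/

noncomputable def stepFun (f : ℕ → ℝ) (x : ℝ) : ℝ :=
  ∑' k : ℕ, if (k : ℝ) ≤ x then f k else 0

lemma summable_ite {f : ℕ → ℝ} (hf : Summable f) (x : ℝ) :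
    Summable (fun k : ℕ => if (k : ℝ) ≤ x then f k else 0) := by
  exact (hf.indicator {k : ℕ | (k : ℝ) ≤ x}).congr fun k => by simp [Set.indicator_apply]

lemma stepFun_eq_sum (f : ℕ → ℝ) {x : ℝ} {n : ℕ} (h : x < n) :
    stepFun f x = ∑ k ∈ Finset.range n, if (k : ℝ) ≤ x then f k else 0 := by
  refine tsum_eq_sum ?_
  intro k hk
  simp only [Finset.mem_range, not_lt] at hk
  have : ¬ ((k : ℝ) ≤ x) := by
    push_neg
    calc x < n := h
    _ ≤ k := by exact_mod_cast hk
  simp [this]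

lemma stepFun_nat (f : ℕ → ℝ) (n : ℕ) :
    stepFun f n = ∑ k ∈ Finset.range (n+1), f k := by
  rw [stepFun_eq_sum f (show (n:ℝ) < (n+1 : ℕ) by push_cast; linarith)]
  refine Finset.sum_congr rfl ?_
  intro k hk
  simp only [Finset.mem_range] at hk
  have : (k : ℝ) ≤ n := by exact_mod_cast Nat.lt_succ_iff.mp hk
  rw [if_pos this]

lemma stepFun_half (f : ℕ → ℝ) (n : ℕ) :
    stepFun f ((n : ℝ) - 1/2) = ∑ k ∈ Finset.range n, f k := by
  rw [stepFun_eq_sum f (show (n:ℝ) - 1/2 < n by linarith)]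
  refine Finset.sum_congr rfl ?_
  intro k hk
  simp only [Finset.mem_range] at hk
  have : (k : ℝ) ≤ (n : ℝ) - 1/2 := by
    have h1 : (k:ℝ) + 1 ≤ n := by exact_mod_cast Nat.succ_le_of_lt hk
    linarith
  rw [if_pos this]

lemma stepFun_jump (f : ℕ → ℝ) (n : ℕ) :
    stepFun f n - stepFun f ((n : ℝ) - 1/2) = f n := by
  rw [stepFun_nat, stepFun_half, Finset.sum_range_succ]; ring

lemma monotone_stepFun {f : ℕ → ℝ} (hf : ∀ k, 0 ≤ f k) (hs : Summable f) :
    Monotone (stepFun f) := by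
  intro x y hxy
  refine Summable.tsum_le_tsum ?_ (summable_ite hs x) (summable_ite hs y)
  intro k
  by_cases h : (k : ℝ) ≤ x
  · simp [h, h.trans hxy]
  · simp only [h, if_false]
    by_cases h' : (k : ℝ) ≤ y <;> simp [h', hf k]

lemma stepFun_locally_const {f : ℕ → ℝ} (x : ℝ) :
    ∃ b : ℝ, x < b ∧ ∀ y, x ≤ y → y < b → stepFun f y = stepFun f x := by
  by_cases hx : x < 0
  · refine ⟨0, hx, fun y hxy hy => ?_⟩
    have hiff : ∀ k : ℕ, ((k:ℝ) ≤ y ↔ (k:ℝ) ≤ x) := by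
      intro k
      constructor
      · intro h; exfalso; have : (0:ℝ) ≤ k := Nat.cast_nonneg k; linarith
      · intro h; linarith
    unfold stepFun; exact tsum_congr fun k => by simp only [hiff]
  · push_neg at hx
    refine ⟨(Nat.floor x : ℝ) + 1, Nat.lt_floor_add_one x, fun y hxy hy => ?_⟩
    have hiff : ∀ k : ℕ, ((k:ℝ) ≤ y ↔ (k:ℝ) ≤ x) := by
      intro k
      constructor
      · intro h
        have hk : (k : ℝ) < (Nat.floor x : ℝ) + 1 := lt_of_le_of_lt h hy
        have : k ≤ Nat.floor x := by
          have : k < Nat.floor x + 1 := by exact_mod_cast hk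
          omega
        exact le_trans (by exact_mod_cast this) (Nat.floor_le hx)
      · intro h; linarith
    unfold stepFun; exact tsum_congr fun k => by simp only [hiff]

lemma continuousWithinAt_stepFun (f : ℕ → ℝ) (x : ℝ) :
    ContinuousWithinAt (stepFun f) (Set.Ici x) x := by
  obtain ⟨b, hb, hconst⟩ := stepFun_locally_const (f := f) x
  have hev : stepFun f =ᶠ[𝓝[Set.Ici x] x] (fun _ => stepFun f x) := by
    have hmem : Set.Ico x b ∈ 𝓝[Set.Ici x] x := by
      rw [← Set.Ici_inter_Iio]
      exact inter_mem self_mem_nhdsWithin (mem_nhdsWithin_of_mem_nhds (Iio_mem_nhds hb))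
    filter_upwards [hmem] with y hy
    exact hconst y hy.1 hy.2
  exact continuousWithinAt_const.congr_of_eventuallyEq hev (hconst x le_rfl hb)

lemma stepFun_neg {f : ℕ → ℝ} {x : ℝ} (hx : x < 0) : stepFun f x = 0 := by
  unfold stepFun
  convert tsum_zero with k
  have : ¬ ((k:ℝ) ≤ x) := by
    push_neg; exact lt_of_lt_of_le hx (Nat.cast_nonneg k)
  simp [this]

lemma stepFun_atBot (f : ℕ → ℝ) : Tendsto (stepFun f) atBot (𝓝 0) := by
  refine Tendsto.congr' ?_ tendsto_const_nhds
  filter_upwards [eventually_lt_atBot (0:ℝ)] with x hx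
  exact (stepFun_neg hx).symm

lemma stepFun_floor {f : ℕ → ℝ} {x : ℝ} (hx : 0 ≤ x) :
    stepFun f x = ∑ k ∈ Finset.range (Nat.floor x + 1), f k := by
  rw [stepFun_eq_sum f (show x < (Nat.floor x + 1 : ℕ) by push_cast; exact Nat.lt_floor_add_one x)]
  refine Finset.sum_congr rfl fun k hk => ?_
  simp only [Finset.mem_range] at hk
  have hk' : k ≤ Nat.floor x := Nat.lt_succ_iff.mp hk
  have : (k : ℝ) ≤ x := le_trans (by exact_mod_cast hk') (Nat.floor_le hx)
  rw [if_pos this]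

lemma stepFun_atTop {f : ℕ → ℝ} {L : ℝ} (hf : HasSum f L) :
    Tendsto (stepFun f) atTop (𝓝 L) := by
  have h1 : Tendsto (fun n : ℕ => ∑ k ∈ Finset.range n, f k) atTop (𝓝 L) :=
    hf.tendsto_sum_nat
  have h2 : Tendsto (fun x : ℝ => Nat.floor x + 1) atTop atTop :=
    tendsto_atTop_mono (fun _ => Nat.le_succ _) (tendsto_nat_floor_atTop (α := ℝ))
  have h3 : Tendsto (fun x : ℝ => ∑ k ∈ Finset.range (Nat.floor x + 1), f k) atTop (𝓝 L) :=
    h1.comp h2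
  refine Tendsto.congr' ?_ h3
  filter_upwards [eventually_ge_atTop (0:ℝ)] with x hx
  exact (stepFun_floor hx).symm

lemma isCDF_stepFun {f : ℕ → ℝ} (hf : ∀ k, 0 ≤ f k) (hsum : HasSum f 1) :
    IsCDF (stepFun f) :=
  ⟨monotone_stepFun hf hsum.summable, continuousWithinAt_stepFun f,
    stepFun_atBot f, stepFun_atTop hsum⟩

lemma stepFun_comb {f g : ℕ → ℝ} (hf : Summable f) (hg : Summable g) (a b x : ℝ) :
    stepFun (fun k => a * f k + b * g k) x = a * stepFun f x + b * stepFun g x := by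
  unfold stepFun
  rw [← tsum_mul_left, ← tsum_mul_left,
    ← Summable.tsum_add ((summable_ite hf x).mul_left a) ((summable_ite hg x).mul_left b)]
  exact tsum_congr fun k => by by_cases h : (k:ℝ) ≤ x <;> simp [h]

lemma hasSum_poisson (lam : ℝ) :
    HasSum (fun k : ℕ => lam ^ k * Real.exp (-lam) / (Nat.factorial k)) 1 := by
  have h := (Real.summable_pow_div_factorial lam).hasSum
  have htsum : ∑' n : ℕ, lam ^ n / (Nat.factorial n) = Real.exp lam := by
    rw [Real.exp_eq_exp_ℝ, NormedSpace.exp_eq_tsum_div]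
  rw [htsum] at h
  have h2 := h.mul_right (Real.exp (-lam))
  have hone : Real.exp lam * Real.exp (-lam) = 1 := by
    rw [← Real.exp_add]; simp
  rw [hone] at h2
  have hfun : (fun k : ℕ => lam ^ k / (Nat.factorial k) * Real.exp (-lam))
      = fun k : ℕ => lam ^ k * Real.exp (-lam) / (Nat.factorial k) := by
    funext k; ring
  rwa [hfun] at h2

/-- Identifiability for a two-component Poisson mixture:
if λ_s < λ_b then α₀ = α; if λ_s > λ_b then α₀ = α(1 − exp(λ_b − λ_s)). -/
theorem alpha0_poisson
    (lams lamb : ℝ) (hlams : 0 < lams) (hlamb : 0 < lamb) (hne : lams ≠ lamb)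
    (Fs Fb : ℝ → ℝ) (hFs : Fs = poissonCDF lams) (hFb : Fb = poissonCDF lamb)
    (α : ℝ) (hα : α ∈ Set.Ioc (0 : ℝ) 1)
    (F : ℝ → ℝ) (hF : F = fun x => α * Fs x + (1 - α) * Fb x) :
    (lams < lamb → alpha0 F Fb = α) ∧
    (lamb < lams → alpha0 F Fb = α * (1 - Real.exp (lamb - lams))) := by
  obtain ⟨hα0, hα1⟩ := hα
  set ps : ℕ → ℝ := fun k => lams ^ k * Real.exp (-lams) / (Nat.factorial k) with hps_def
  set pb : ℕ → ℝ := fun k => lamb ^ k * Real.exp (-lamb) / (Nat.factorial k) with hpb_def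
  have hps : HasSum ps 1 := hasSum_poisson lams
  have hpb : HasSum pb 1 := hasSum_poisson lamb
  have hpspos : ∀ k, 0 < ps k := fun k => by
    have := Real.exp_pos (-lams)
    have := pow_pos hlams k
    have : (0:ℝ) < (Nat.factorial k : ℝ) := by exact_mod_cast Nat.factorial_pos k
    positivity
  have hpbpos : ∀ k, 0 < pb k := fun k => by
    have := Real.exp_pos (-lamb)
    have := pow_pos hlamb k
    have : (0:ℝ) < (Nat.factorial k : ℝ) := by exact_mod_cast Nat.factorial_pos k
    positivity
  have hFs' : Fs = stepFun ps := hFs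
  have hFb' : Fb = stepFun pb := hFb
  -- the relevant reweighting
  have key : ∀ γ : ℝ, 0 < γ →
      (fun x => (F x - (1 - γ) * Fb x) / γ)
        = stepFun (fun k => (α/γ) * ps k + (1 - α/γ) * pb k) := by
    intro γ hγ
    funext x
    rw [stepFun_comb hps.summable hpb.summable, hF, hFs', hFb']
    field_simp
    ring
  -- ratio of point masses
  have hE : Real.exp (lamb - lams) * Real.exp (-lamb) = Real.exp (-lams) := by
    rw [← Real.exp_add]; ring_nf
  have hratio : ∀ n : ℕ, ps n = (lams/lamb)^n * Real.exp (lamb - lams) * pb n := by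
    intro n
    have hb' : (lamb:ℝ)^n ≠ 0 := by positivity
    have hfac : ((Nat.factorial n : ℝ)) ≠ 0 := by
      exact_mod_cast (Nat.factorial_pos n).ne'
    simp only [hps_def, hpb_def, div_pow]
    field_simp
    linear_combination (-1:ℝ) * hE
  -- pointwise nonnegativity condition
  have hwcond : ∀ γ : ℝ, 0 < γ → ∀ n : ℕ,
      (0 ≤ α/γ * ps n + (1 - α/γ) * pb n ↔
        α * (1 - (lams/lamb)^n * Real.exp (lamb - lams)) ≤ γ) := by
    intro γ hγ n
    set r := (lams/lamb)^n * Real.exp (lamb - lams) with hr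
    have hrpos : 0 < r := by positivity
    have hpb' := hpbpos n
    have h1 : α/γ * ps n + (1 - α/γ) * pb n = pb n * (α * r + γ - α) / γ := by
      rw [hratio n, ← hr]
      field_simp
      ring
    rw [h1]
    constructor
    · intro h
      have h2 : 0 ≤ pb n * (α * r + γ - α) := by
        by_contra hneg
        push_neg at hneg
        have := div_neg_of_neg_of_pos hneg hγ
        linarith
      have h3 : 0 ≤ α * r + γ - α := by
        by_contra hneg
        push_neg at hneg
        nlinarith
      nlinarith
    · intro h
      have h3 : 0 ≤ α * r + γ - α := by nlinarith
      exact div_nonneg (mul_nonneg hpb'.le h3) hγ.le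
  -- characterization of being a CDF
  have hchar : ∀ γ : ℝ, γ ∈ Set.Ioc (0:ℝ) 1 →
      (IsCDF (fun x => (F x - (1 - γ) * Fb x) / γ) ↔
        ∀ n : ℕ, α * (1 - (lams/lamb)^n * Real.exp (lamb - lams)) ≤ γ) := by
    intro γ hγ
    rw [key γ hγ.1]
    constructor
    · intro h n
      rw [← hwcond γ hγ.1 n]
      have hmono := h.1 (show ((n:ℝ) - 1/2) ≤ (n:ℝ) by linarith)
      have hj := stepFun_jump (fun k => α/γ * ps k + (1 - α/γ) * pb k) n
      linarith
    · intro h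
      refine isCDF_stepFun (fun n => (hwcond γ hγ.1 n).mpr (h n)) ?_
      have hs2 := (hps.mul_left (α/γ)).add (hpb.mul_left (1 - α/γ))
      convert hs2 using 1
      · rfl
      ring
  constructor
  · -- case lams < lamb
    intro hlt
    have hq : lams/lamb < 1 := (div_lt_one hlamb).mpr hlt
    have hq0 : 0 < lams/lamb := by positivity
    have hset : {γ : ℝ | γ ∈ Set.Ioc (0:ℝ) 1 ∧
        IsCDF (fun x => (F x - (1 - γ) * Fb x) / γ)} = Set.Icc α 1 := by
      ext γ
      simp only [Set.mem_setOf_eq, Set.mem_Icc]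
      constructor
      · rintro ⟨hγ, hcdf⟩
        refine ⟨?_, hγ.2⟩
        by_contra hlt'
        push_neg at hlt'
        have hEpos := Real.exp_pos (lamb - lams)
        obtain ⟨n, hn⟩ := exists_pow_lt_of_lt_one
          (show 0 < (α - γ)/(α * Real.exp (lamb - lams)) by
            have : 0 < α - γ := by linarith
            positivity) hq
        have h2 := (hchar γ hγ).mp hcdf n
        have hn' : (lams/lamb)^n * (α * Real.exp (lamb - lams)) < α - γ :=
          (lt_div_iff₀ (by positivity)).mp hn
        nlinarith [pow_pos hq0 n]
      · rintro ⟨h1, h2⟩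
        have hγ0 : 0 < γ := lt_of_lt_of_le hα0 h1
        refine ⟨⟨hγ0, h2⟩, ?_⟩
        rw [hchar γ ⟨hγ0, h2⟩]
        intro n
        have hrn : 0 ≤ (lams/lamb)^n * Real.exp (lamb - lams) := by positivity
        nlinarith
    unfold alpha0
    rw [hset]
    exact csInf_Icc hα1
  · -- case lamb < lams
    intro hlt
    have hq1 : 1 < lams/lamb := (one_lt_div hlamb).mpr hlt
    have hE1 : Real.exp (lamb - lams) < 1 := by
      rw [Real.exp_lt_one_iff]
      linarith
    have hEpos := Real.exp_pos (lamb - lams)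
    set c := α * (1 - Real.exp (lamb - lams)) with hc
    have hc0 : 0 < c := by nlinarith
    have hcα : c ≤ α := by nlinarith
    have hset : {γ : ℝ | γ ∈ Set.Ioc (0:ℝ) 1 ∧
        IsCDF (fun x => (F x - (1 - γ) * Fb x) / γ)} = Set.Icc c 1 := by
      ext γ
      simp only [Set.mem_setOf_eq, Set.mem_Icc]
      constructor
      · rintro ⟨hγ, hcdf⟩
        refine ⟨?_, hγ.2⟩
        have h2 := (hchar γ hγ).mp hcdf 0
        simp only [pow_zero, one_mul] at h2
        exact h2
      · rintro ⟨h1, h2⟩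
        have hγ0 : 0 < γ := lt_of_lt_of_le hc0 h1
        refine ⟨⟨hγ0, h2⟩, ?_⟩
        rw [hchar γ ⟨hγ0, h2⟩]
        intro n
        have hqn : 1 ≤ (lams/lamb)^n := one_le_pow₀ hq1.le
        nlinarith
    unfold alpha0
    rw [hset]
    exact csInf_Icc (le_trans hcα hα1)
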